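/- arXiv:0904.2108 — 6 statements merged into one kernel-verified Lean document; each statement's English description precedes it below -/
import Mathlib

section
/- Let d ≥ 1 and let λ_1, ..., λ_d be positive integers with λ_j ≥ 2 for all j. Let T = conv(0, λ_1 e_1, ..., λ_d e_d) ⊆ ℝ^d. If T is a maximal lattice-free simplex (no integer point in its interior, and every facet contains an integer point in its relative interior), then 1 = 1/λ_1 + ... + 1/λ_d. -/
private lemma aux_mem_hull (d : ℕ) (lam : Fin d → ℤ) (hlam : ∀ j, 2 ≤ lam j)
    (x : Fin d → ℝ) (hx : ∀ i, 0 < x i) (hs : ∑ i, x i / (lam i : ℝ) < 1)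
    (v : Fin (d + 1) → (Fin d → ℝ))
    (hv0 : v 0 = 0)
    (hv : ∀ j : Fin d, v j.succ = Pi.single j ((lam j : ℝ))) :
    x ∈ convexHull ℝ (Set.range v) := by
  have hlamR : ∀ j, (0:ℝ) < (lam j : ℤ) := fun j => by
    have := hlam j; exact_mod_cast by linarith
  set w : Fin (d+1) → ℝ := Fin.cases (1 - ∑ i, x i / (lam i : ℝ)) (fun j => x j / (lam j : ℝ)) with hw
  have hwsum : ∑ k, w k = 1 := by
    rw [Fin.sum_univ_succ]; simp [hw]
  have hwnn : ∀ k ∈ Finset.univ, 0 ≤ w k := by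
    intro k _
    induction k using Fin.cases with
    | zero => simp [hw]; linarith
    | succ j =>
      simp only [hw, Fin.cases_succ]
      exact div_nonneg (hx j).le (hlamR j).le
  have := Finset.univ.centerMass_mem_convexHull hwnn (by rw [hwsum]; norm_num)
    (fun k _ => Set.mem_range_self k (f := v))
  rwa [Finset.centerMass_eq_of_sum_1 _ _ hwsum, show ∑ k, w k • v k = x from ?_] at this
  rw [Fin.sum_univ_succ]
  simp only [hw, Fin.cases_zero, Fin.cases_succ, hv0, hv, smul_zero, zero_add]
  have key : ∀ j : Fin d, (x j / (lam j : ℝ)) • (Pi.single j ((lam j : ℝ)) : Fin d → ℝ)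
      = (Pi.single j (x j) : Fin d → ℝ) := by
    intro j
    rw [← Pi.single_smul]
    rw [smul_eq_mul]
    field_simp
    rw [mul_div_cancel_right₀ (x j) (ne_of_gt (hlamR j))]
  simp_rw [key]
  exact Finset.univ_sum_single x

private lemma aux_pos_of_intrinsic {d : ℕ} (F : Set (Fin d → ℝ))
    (hFnn : ∀ y ∈ F, ∀ i, 0 ≤ y i) {x : Fin d → ℝ}
    (hx : x ∈ intrinsicInterior ℝ F) (j : Fin d) (q : Fin d → ℝ) (hq : q ∈ F)
    (hqj : 0 < q j) : 0 < x j := by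
  have hxF : x ∈ F := intrinsicInterior_subset hx
  rcases (hFnn x hxF j).lt_or_eq with h | h
  · exact h
  exfalso
  obtain ⟨y, hy, hyx⟩ := hx
  have hxq : x ≠ q := by
    intro hxq; rw [hxq] at h; exact absurd h.symm (ne_of_gt hqj)
  have hdist : 0 < dist x q := dist_pos.mpr hxq
  obtain ⟨ε, hε, hball⟩ := Metric.mem_nhds_iff.mp (mem_interior_iff_mem_nhds.mp hy)
  set t : ℝ := ε / (2 * dist x q) with ht
  have htpos : 0 < t := by positivity
  set p : Fin d → ℝ := t • (x - q) + x with hp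
  have hpmem : p ∈ affineSpan ℝ F := by
    have hx' : x ∈ affineSpan ℝ F := subset_affineSpan ℝ F hxF
    have hq' : q ∈ affineSpan ℝ F := subset_affineSpan ℝ F hq
    have := AffineSubspace.smul_vsub_vadd_mem (affineSpan ℝ F) t hx' hq' hx'
    simpa [vsub_eq_sub, vadd_eq_add] using this
  have hdistp : dist (⟨p, hpmem⟩ : affineSpan ℝ F) y < ε := by
    rw [Subtype.dist_eq, hyx]
    have : dist p x = t * dist x q := by
      rw [dist_eq_norm, hp, add_sub_cancel_right, norm_smul, Real.norm_eq_abs,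
        abs_of_pos htpos, dist_eq_norm]
    have h2 : t * dist x q = ε / 2 := by
      rw [ht]; field_simp
    rw [this, h2]; linarith
  have hpF : p ∈ F := hball hdistp
  have := hFnn p hpF j
  have hpj : p j = -(t * q j) := by
    simp only [hp, Pi.add_apply, Pi.smul_apply, Pi.sub_apply, smul_eq_mul]
    rw [← h]; ring
  rw [hpj] at this
  nlinarith

/-- If `T = conv(0, λ₁e₁, …, λ_d e_d)` with all `λ_j ≥ 2` is a maximal
lattice-free simplex (no integer point in its interior, and every facet contains an
integer point in its relative interior), then `∑ 1/λ_j = 1`. -/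
theorem stmt0 (d : ℕ) (hd : 1 ≤ d) (lam : Fin d → ℤ) (hlam : ∀ j, 2 ≤ lam j)
    (v : Fin (d + 1) → (Fin d → ℝ))
    (hv0 : v 0 = 0)
    (hv : ∀ j : Fin d, v j.succ = Pi.single j ((lam j : ℝ)))
    (T : Set (Fin d → ℝ)) (hT : T = convexHull ℝ (Set.range v))
    (hfree : ∀ x ∈ interior T, ¬ ∀ i, ∃ z : ℤ, x i = z)
    (hfacet : ∀ k : Fin (d + 1),
      ∃ x ∈ intrinsicInterior ℝ (convexHull ℝ (v '' {k}ᶜ)), ∀ i, ∃ z : ℤ, x i = z) :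
    ∑ j, (1 : ℝ) / (lam j) = 1 := by
  have hlamR : ∀ j, (0:ℝ) < (lam j : ℤ) := fun j => by
    have := hlam j; exact_mod_cast by linarith
  -- Step 1 : 1 ≤ ∑ 1/λ
  have h1 : 1 ≤ ∑ j, (1 : ℝ) / (lam j) := by
    by_contra hcon
    push_neg at hcon
    set U : Set (Fin d → ℝ) := {x | (∀ i, 0 < x i) ∧ ∑ i, x i / (lam i : ℝ) < 1} with hU
    have hUopen : IsOpen U := by
      have h1 : IsOpen {x : Fin d → ℝ | ∀ i, 0 < x i} := by
        rw [show {x : Fin d → ℝ | ∀ i, 0 < x i} = ⋂ i, {x | 0 < x i} by ext; simp]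
        exact isOpen_iInter_of_finite fun i =>
          isOpen_lt continuous_const (continuous_apply i)
      have hc : Continuous fun x : Fin d → ℝ => ∑ i, x i / (lam i : ℝ) :=
        continuous_finset_sum _ fun i _ => (continuous_apply i).div_const _
      have h2 : IsOpen {x : Fin d → ℝ | ∑ i, x i / (lam i : ℝ) < 1} :=
        isOpen_lt hc continuous_const
      exact (h1.inter h2)
    have hUT : U ⊆ T := by
      intro x hxU
      rw [hT]
      exact aux_mem_hull d lam hlam x hxU.1 hxU.2 v hv0 hv
    have huU : (fun _ => (1:ℝ)) ∈ U := by
      refine ⟨fun i => one_pos, ?_⟩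
      simpa [one_div] using hcon
    have hu_int : (fun _ => (1:ℝ)) ∈ interior T :=
      mem_interior.mpr ⟨U, hUT, hUopen, huU⟩
    exact hfree _ hu_int (fun i => ⟨1, by norm_num⟩)
  -- Step 2 : ∑ 1/λ ≤ 1
  obtain ⟨x, hxI, hxZ⟩ := hfacet 0
  set g : Fin d → (Fin d → ℝ) := fun j => Pi.single j ((lam j : ℝ)) with hg
  have himg : v '' ({(0 : Fin (d+1))}ᶜ) = Set.range g := by
    have hcompl : ({(0 : Fin (d+1))}ᶜ : Set (Fin (d+1))) = Set.range Fin.succ := by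
      ext k
      simp only [Set.mem_compl_iff, Set.mem_singleton_iff, Set.mem_range]
      constructor
      · intro hk
        exact ⟨k.pred hk, Fin.succ_pred k hk⟩
      · rintro ⟨j, rfl⟩
        exact Fin.succ_ne_zero j
    rw [hcompl, ← Set.range_comp]
    ext y
    simp only [Set.mem_range, Function.comp_apply]
    constructor
    · rintro ⟨j, rfl⟩; exact ⟨j, (hv j).symm⟩
    · rintro ⟨j, rfl⟩; exact ⟨j, hv j⟩
  set F : Set (Fin d → ℝ) := convexHull ℝ (Set.range g) with hF
  rw [himg] at hxI
  have hgF : ∀ j, g j ∈ F := fun j => subset_convexHull ℝ _ (Set.mem_range_self j)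
  have hFnn : ∀ y ∈ F, ∀ i, 0 ≤ y i := by
    have : F ⊆ {y : Fin d → ℝ | ∀ i, 0 ≤ y i} := by
      apply convexHull_min
      · rintro _ ⟨j, rfl⟩ i
        simp only [hg]
        rcases eq_or_ne i j with rfl | hne
        · rw [Pi.single_eq_same]; exact (hlamR i).le
        · rw [Pi.single_eq_of_ne hne]
      · intro a ha b hb s t hs ht hst i
        exact add_nonneg (mul_nonneg hs (ha i)) (mul_nonneg ht (hb i))
    exact fun y hy => this hy
  have hFsum : ∀ y ∈ F, ∑ i, y i / (lam i : ℝ) = 1 := by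
    have : F ⊆ {y : Fin d → ℝ | ∑ i, y i / (lam i : ℝ) = 1} := by
      apply convexHull_min
      · rintro _ ⟨j, rfl⟩
        show ∑ i, g j i / (lam i : ℝ) = 1
        rw [Finset.sum_eq_single j]
        · simp only [hg, Pi.single_eq_same]
          exact div_self (ne_of_gt (hlamR j))
        · intro i _ hne
          simp only [hg]
          rw [Pi.single_eq_of_ne hne, zero_div]
        · intro habs; exact absurd (Finset.mem_univ j) habs
      · intro a ha b hb s t hs ht hst
        show ∑ i, (s • a + t • b) i / (lam i : ℝ) = 1
        simp only [Pi.add_apply, Pi.smul_apply, smul_eq_mul, add_div, mul_div_assoc]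
        rw [Finset.sum_add_distrib, ← Finset.mul_sum, ← Finset.mul_sum, ha, hb]
        simpa using hst
    exact fun y hy => this hy
  have hxpos : ∀ i, 0 < x i := by
    intro i
    refine aux_pos_of_intrinsic F hFnn hxI i (g i) (hgF i) ?_
    simp only [hg, Pi.single_eq_same]; exact hlamR i
  have hx1 : ∀ i, 1 ≤ x i := by
    intro i
    obtain ⟨z, hz⟩ := hxZ i
    have : 0 < z := by exact_mod_cast hz ▸ hxpos i
    have : (1:ℤ) ≤ z := this
    rw [hz]; exact_mod_cast this
  have h2 : ∑ j, (1 : ℝ) / (lam j) ≤ 1 := by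
    have hxF : x ∈ F := intrinsicInterior_subset hxI
    calc ∑ j, (1 : ℝ) / (lam j) ≤ ∑ j, x j / (lam j : ℝ) := by
          apply Finset.sum_le_sum
          intro j _
          exact div_le_div_of_nonneg_right (hx1 j) (hlamR j).le
      _ = 1 := hFsum x hxF
  linarith
end

section
/- Let T = conv(0, λ_1 e_1, ..., λ_d e_d) ⊆ ℝ^d with positive integers λ_j, and suppose the facet of T not containing 0 has inequality description α_1 x_1 + ... + α_d x_d ≤ r with all α_j > 0 and r > 0 integers. If T is maximal lattice-free, then r = α_1 + ... + α_d. -/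
open Set Finset

lemma extend_of_mem_intrinsicInterior {E : Type*} [NormedAddCommGroup E] [NormedSpace ℝ E]
    {s : Set E} {x p : E} (hx : x ∈ intrinsicInterior ℝ s) (hp : p ∈ s) :
    ∃ t : ℝ, 1 < t ∧ t • (x - p) + p ∈ s := by
  obtain ⟨y, hy, rfl⟩ := hx
  have hpA : p ∈ affineSpan ℝ s := subset_affineSpan ℝ s hp
  have hmem : ∀ t : ℝ, t • ((y : E) - p) + p ∈ affineSpan ℝ s := by
    intro t
    have := AffineSubspace.smul_vsub_vadd_mem (affineSpan ℝ s) t y.2 hpA hpA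
    simpa [vsub_eq_sub, vadd_eq_add] using this
  set γ : ℝ → affineSpan ℝ s := fun t => ⟨t • ((y : E) - p) + p, hmem t⟩ with hγ
  have hcont : Continuous γ := by
    apply Continuous.subtype_mk
    exact (continuous_id.smul continuous_const).add continuous_const
  have hγ1 : γ 1 = y := by
    apply Subtype.ext
    simp [hγ]
  have hopen : IsOpen (γ ⁻¹' interior ((↑) ⁻¹' s : Set <| affineSpan ℝ s)) :=
    isOpen_interior.preimage hcont
  have h1 : (1 : ℝ) ∈ γ ⁻¹' interior ((↑) ⁻¹' s : Set <| affineSpan ℝ s) := by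
    simp [hγ1, hy]
  obtain ⟨ε, hε, hball⟩ := Metric.isOpen_iff.1 hopen 1 h1
  refine ⟨1 + ε / 2, by linarith, ?_⟩
  have ht : (1 + ε / 2) ∈ Metric.ball (1 : ℝ) ε := by
    simp [Real.dist_eq, abs_of_nonneg, hε.le]
    linarith
  have := hball ht
  exact interior_subset (a := γ (1 + ε / 2)) this

/-- let `T = conv(0, λ₁e₁, …, λ_d e_d)` with positive integer `λ_j`, and
suppose the facet of `T` not containing `0` is described by `α·x ≤ r` with positive
integers `α_j`, `r` and `α_j λ_j = r`. If `T` is maximal lattice-free, then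
`r = α_1 + … + α_d`. -/
theorem stmt5 (d : ℕ) (hd : 1 ≤ d) (lam : Fin d → ℤ) (hlam : ∀ j, 0 < lam j)
    (v : Fin (d + 1) → (Fin d → ℝ))
    (hv0 : v 0 = 0)
    (hv : ∀ j : Fin d, v j.succ = Pi.single j ((lam j : ℝ)))
    (T : Set (Fin d → ℝ)) (hT : T = convexHull ℝ (Set.range v))
    (α : Fin d → ℤ) (r : ℤ) (hα : ∀ j, 0 < α j) (hr : 0 < r)
    (hfacetEq : ∀ j, α j * lam j = r)
    (hfree : ∀ x ∈ interior T, ¬ ∀ i, ∃ z : ℤ, x i = z)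
    (hfacet : ∀ k : Fin (d + 1),
      ∃ x ∈ intrinsicInterior ℝ (convexHull ℝ (v '' {k}ᶜ)), ∀ i, ∃ z : ℤ, x i = z) :
    r = ∑ j, α j := by
  set f : (Fin d → ℝ) → ℝ := fun x => ∑ j, (α j : ℝ) * x j with hf
  have hflin : IsLinearMap ℝ f := by
    constructor
    · intro a b; simp [hf, mul_add, Finset.sum_add_distrib]
    · intro c a; simp [hf, Finset.mul_sum, mul_left_comm]
  have hfcont : Continuous f := by
    apply continuous_finset_sum
    intro j _
    exact continuous_const.mul (continuous_apply j)
  have hrR : (0 : ℝ) < (r : ℝ) := by exact_mod_cast hr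
  -- value of f on the nonzero vertices
  have hfv : ∀ j : Fin d, f (v j.succ) = r := by
    intro j
    rw [hv j]
    simp only [hf]
    rw [Finset.sum_eq_single j]
    · rw [Pi.single_eq_same]; exact_mod_cast hfacetEq j
    · intro i _ hij; rw [Pi.single_eq_of_ne hij, mul_zero]
    · intro h; exact absurd (Finset.mem_univ j) h
  set F : Set (Fin d → ℝ) := convexHull ℝ (v '' ({0}ᶜ)) with hF
  -- F lies on the hyperplane f = r
  have hFhyp : F ⊆ {x | f x = (r : ℝ)} := by
    apply convexHull_min _ (convex_hyperplane hflin (r : ℝ))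
    rintro y ⟨k, hk, rfl⟩
    obtain ⟨j, rfl⟩ := Fin.eq_succ_of_ne_zero (by simpa using hk)
    exact hfv j
  -- F lies in the nonnegative orthant
  have hFpos : ∀ j : Fin d, F ⊆ {x | 0 ≤ x j} := by
    intro j
    apply convexHull_min _ (convex_halfSpace_ge
      (⟨fun a b => rfl, fun c a => rfl⟩ : IsLinearMap ℝ (fun x : Fin d → ℝ => x j)) 0)
    rintro y ⟨k, hk, rfl⟩
    obtain ⟨i, rfl⟩ := Fin.eq_succ_of_ne_zero (by simpa using hk)
    simp only [Set.mem_setOf_eq]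
    rw [hv i]
    rcases eq_or_ne i j with rfl | hij
    · rw [Pi.single_eq_same]
      have := hlam i; positivity
    · rw [Pi.single_eq_of_ne (Ne.symm hij)]
  -- integer point in the relative interior of the facet opposite 0
  obtain ⟨x, hxI, hxZ⟩ := hfacet 0
  have hxF : x ∈ F := intrinsicInterior_subset hxI
  have hx1 : ∀ j, (1 : ℝ) ≤ x j := by
    intro j
    obtain ⟨z, hz⟩ := hxZ j
    have hx0 : (0 : ℝ) ≤ x j := hFpos j hxF
    have hxne : x j ≠ 0 := by
      intro h0
      have hpF : v j.succ ∈ F := subset_convexHull ℝ _ ⟨j.succ, by simp [Fin.succ_ne_zero], rfl⟩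
      obtain ⟨t, ht, hq⟩ := extend_of_mem_intrinsicInterior hxI hpF
      have hqj : (0:ℝ) ≤ (t • (x - v j.succ) + v j.succ) j := hFpos j hq
      have hpj : v j.succ j = (lam j : ℝ) := by rw [hv j, Pi.single_eq_same]
      have : (t • (x - v j.succ) + v j.succ) j = t * (x j - (lam j:ℝ)) + (lam j:ℝ) := by
        simp [hpj]
      rw [this, h0] at hqj
      have hlj : (0:ℝ) < (lam j : ℝ) := by exact_mod_cast hlam j
      nlinarith
    have hz0 : 0 ≤ z := by
      have : (0:ℝ) ≤ (z:ℝ) := hz ▸ hx0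
      exact_mod_cast this
    have hzne : z ≠ 0 := by rintro rfl; exact hxne (by simpa using hz)
    have : (1:ℤ) ≤ z := lt_of_le_of_ne hz0 (Ne.symm hzne)
    rw [hz]; exact_mod_cast this
  -- lower bound: ∑ α ≤ r
  have hlower : ∑ j, α j ≤ r := by
    have h1 : (∑ j, (α j : ℝ)) ≤ f x := by
      rw [hf]
      apply Finset.sum_le_sum
      intro j _
      have := (hα j); have haR : (0:ℝ) ≤ (α j : ℝ) := by positivity
      calc (α j : ℝ) = (α j : ℝ) * 1 := by ring
        _ ≤ (α j : ℝ) * x j := by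
            apply mul_le_mul_of_nonneg_left (hx1 j) haR
    have h2 : f x = (r : ℝ) := hFhyp hxF
    rw [h2] at h1
    exact_mod_cast h1
  -- upper bound: r ≤ ∑ α
  have hupper : r ≤ ∑ j, α j := by
    by_contra hlt
    push_neg at hlt
    set u : Fin d → ℝ := fun _ => 1 with hu
    set U : Set (Fin d → ℝ) := {x | (∀ j, 0 < x j) ∧ f x < r} with hU
    have hUopen : IsOpen U := by
      have h1 : IsOpen {x : Fin d → ℝ | ∀ j, 0 < x j} := by
        rw [Set.setOf_forall]
        exact isOpen_iInter_of_finite fun j => isOpen_lt continuous_const (continuous_apply j)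
      have h2 : IsOpen {x : Fin d → ℝ | f x < r} := isOpen_lt hfcont continuous_const
      exact h1.inter h2
    have hUT : U ⊆ convexHull ℝ (Set.range v) := by
      rintro x ⟨hxpos, hxlt⟩
      set w : Fin (d + 1) → ℝ :=
        fun i => Fin.cases (1 - f x / r) (fun j => (α j : ℝ) * x j / r) i with hw
      have hwsucc : ∀ j : Fin d, w j.succ = (α j : ℝ) * x j / r := fun j => rfl
      have hw0 : w 0 = 1 - f x / r := rfl
      have hfx0 : 0 ≤ f x := by
        rw [hf]
        apply Finset.sum_nonneg
        intro j _
        have := hα j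
        have := (hxpos j).le
        positivity
      have hwnn : ∀ i ∈ Finset.univ, 0 ≤ w i := by
        intro i _
        induction i using Fin.cases with
        | zero =>
          rw [hw0, sub_nonneg]
          rw [div_le_one hrR]
          exact hxlt.le
        | succ j =>
          rw [hwsucc]
          have := hα j
          have := (hxpos j).le
          positivity
      have hwsum : ∑ i, w i = 1 := by
        rw [Fin.sum_univ_succ, hw0]
        have : ∑ j : Fin d, w j.succ = f x / r := by
          simp only [hwsucc]
          rw [← Finset.sum_div]
        rw [this]; ring
      have hcm : Finset.univ.centerMass w v = x := by
        rw [Finset.centerMass_eq_of_sum_1 _ _ hwsum]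
        funext k
        rw [Finset.sum_apply]
        rw [Fin.sum_univ_succ]
        have hz : (w 0 • v 0) k = 0 := by rw [hv0]; simp
        rw [hz, zero_add]
        rw [Finset.sum_eq_single k]
        · rw [hwsucc, hv k]
          simp only [Pi.smul_apply, Pi.single_eq_same, smul_eq_mul]
          have hrk : (α k : ℝ) * (lam k : ℝ) = (r : ℝ) := by exact_mod_cast hfacetEq k
          have hrne : (r : ℝ) ≠ 0 := ne_of_gt hrR
          field_simp
          linear_combination x k * hrk
        · intro i _ hik
          rw [hv i]
          simp [Pi.single_eq_of_ne, hik]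
        · intro h; exact absurd (Finset.mem_univ k) h
      have : Finset.univ.centerMass w v ∈ convexHull ℝ (Set.range v) :=
        Finset.centerMass_mem_convexHull Finset.univ hwnn
          (by rw [hwsum]; exact one_pos) (fun i _ => Set.mem_range_self i)
      rwa [hcm] at this
    have huU : u ∈ U := by
      constructor
      · intro j; norm_num [hu]
      · have : f u = ∑ j, (α j : ℝ) := by simp [hf, hu]
        rw [this]
        exact_mod_cast (by exact_mod_cast hlt : (∑ j, (α j:ℝ)) < (r:ℝ))
    have huint : u ∈ interior T := by
      rw [mem_interior]
      exact ⟨U, by rw [hT]; exact hUT, hUopen, huU⟩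
    exact hfree u huint (fun i => ⟨1, by norm_num [hu]⟩)
  omega
end

section
/- Let T = conv(0, 2e_1, 3e_2, 7e_3, 43e_4, 1806e_5) ⊆ ℝ^5. Then T contains no integer point in its interior. -/
/-- the simplex `T = conv(0, 2e₁, 3e₂, 7e₃, 43e₄, 1806e₅) ⊆ ℝ⁵`
contains no integer point in its interior. -/
theorem stmt6 :
    ∀ x ∈ interior (convexHull ℝ
      ({0, Pi.single 0 2, Pi.single 1 3, Pi.single 2 7, Pi.single 3 43, Pi.single 4 1806} :
        Set (Fin 5 → ℝ))),
      ¬ ∀ i, ∃ z : ℤ, x i = z := by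
  intro x hx hint
  set S : Set (Fin 5 → ℝ) :=
    {0, Pi.single 0 2, Pi.single 1 3, Pi.single 2 7, Pi.single 3 43, Pi.single 4 1806} with hS
  have hsub : convexHull ℝ S ⊆ {y : Fin 5 → ℝ | (∀ i, 0 ≤ y i) ∧
      903 * y 0 + 602 * y 1 + 258 * y 2 + 42 * y 3 + y 4 ≤ 1806} := by
    apply convexHull_min
    · rintro y (rfl | rfl | rfl | rfl | rfl | rfl) <;>
        exact ⟨fun i => by fin_cases i <;> simp [Pi.single_apply] <;> norm_num,
               by simp [Pi.single_apply] <;> norm_num⟩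
    · rintro y ⟨hy1, hy2⟩ z ⟨hz1, hz2⟩ a b ha hb hab
      refine ⟨fun i => ?_, ?_⟩
      · have h1 := hy1 i; have h2 := hz1 i
        simp only [Pi.add_apply, Pi.smul_apply, smul_eq_mul]
        nlinarith
      · simp only [Pi.add_apply, Pi.smul_apply, smul_eq_mul]
        nlinarith
  rw [mem_interior_iff_mem_nhds, Metric.mem_nhds_iff] at hx
  obtain ⟨ε, hε, hball⟩ := hx
  have key : ∀ i : Fin 5, ∀ c : ℝ, |c| < ε → x + c • (Pi.single i 1 : Fin 5 → ℝ) ∈ convexHull ℝ S := by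
    intro i c hc
    apply hball
    rw [Metric.mem_ball, dist_eq_norm]
    simpa [norm_smul, Pi.norm_single] using hc
  have hpos : ∀ i : Fin 5, 0 < x i := by
    intro i
    have h := hsub (key i (-(ε/2)) (by rw [abs_neg, abs_of_pos (by linarith)]; linarith))
    have h2 := h.1 i
    simp only [Pi.add_apply, Pi.smul_apply, Pi.single_eq_same, smul_eq_mul, mul_one] at h2
    linarith
  have hlt : 903 * x 0 + 602 * x 1 + 258 * x 2 + 42 * x 3 + x 4 < 1806 := by
    have h := hsub (key 4 (ε/2) (by rw [abs_of_pos (by linarith)]; linarith))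
    have h2 := h.2
    simp only [Pi.add_apply, Pi.smul_apply, Pi.single_apply, smul_eq_mul] at h2
    simp at h2
    linarith
  obtain ⟨z0, hz0⟩ := hint 0
  obtain ⟨z1, hz1⟩ := hint 1
  obtain ⟨z2, hz2⟩ := hint 2
  obtain ⟨z3, hz3⟩ := hint 3
  obtain ⟨z4, hz4⟩ := hint 4
  have hb : ∀ (z : ℤ), ∀ i, x i = z → 0 < x i → (1 : ℝ) ≤ z := by
    intro z i hzi hpi
    have : (0 : ℤ) < z := by exact_mod_cast hzi ▸ hpi
    exact_mod_cast this
  have b0 := hb z0 0 hz0 (hpos 0)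
  have b1 := hb z1 1 hz1 (hpos 1)
  have b2 := hb z2 2 hz2 (hpos 2)
  have b3 := hb z3 3 hz3 (hpos 3)
  have b4 := hb z4 4 hz4 (hpos 4)
  rw [hz0, hz1, hz2, hz3, hz4] at hlt
  linarith
end

section
/- The simplex S_1 = conv((0,0,0), (2,0,0), (0,3,0), (0,0,6)) ⊆ ℝ^3 contains no integer point in its interior, and each of its four facets contains an integer point in its relative interior. -/
open Set

private lemma helper7 (a : Fin 3 → ℝ) (c : ℝ) (s : Set (Fin 3 → ℝ)) (U : Set (Fin 3 → ℝ))
    (hU : IsOpen U) (x : Fin 3 → ℝ) (hxU : x ∈ U)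
    (hxc : a 0 * x 0 + a 1 * x 1 + a 2 * x 2 = c)
    (hfs : ∀ y ∈ s, a 0 * y 0 + a 1 * y 1 + a 2 * y 2 = c)
    (hsub : ∀ y : Fin 3 → ℝ, a 0 * y 0 + a 1 * y 1 + a 2 * y 2 = c → y ∈ U →
      y ∈ convexHull ℝ s) :
    x ∈ intrinsicInterior ℝ (convexHull ℝ s) := by
  have hxs : x ∈ convexHull ℝ s := hsub x hxc hxU
  set t := convexHull ℝ s with ht
  have hxspan : x ∈ affineSpan ℝ t := subset_affineSpan ℝ t hxs
  refine mem_intrinsicInterior.2 ⟨⟨x, hxspan⟩, ?_, rfl⟩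
  have hopen : IsOpen ((↑) ⁻¹' U : Set (affineSpan ℝ t)) :=
    hU.preimage continuous_subtype_val
  let S : AffineSubspace ℝ (Fin 3 → ℝ) :=
    { carrier := {y | a 0 * y 0 + a 1 * y 1 + a 2 * y 2 = c}
      smul_vsub_vadd_mem' := by
        intro r p1 p2 p3 h1 h2 h3
        simp only [Set.mem_setOf_eq] at h1 h2 h3 ⊢
        simp only [vsub_eq_sub, vadd_eq_add, Pi.add_apply, Pi.smul_apply, Pi.sub_apply,
          smul_eq_mul]
        linear_combination r * h1 - r * h2 + h3 }
  have hS : affineSpan ℝ s ≤ S := affineSpan_le.2 (fun y hy => hfs y hy)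
  have hspan_eq : affineSpan ℝ t = affineSpan ℝ s := by
    rw [ht]; exact affineSpan_convexHull s
  have hsubset : ((↑) ⁻¹' U : Set (affineSpan ℝ t)) ⊆ (↑) ⁻¹' t := by
    rintro ⟨zv, hzmem⟩ hz
    rw [hspan_eq] at hzmem
    exact hsub zv (hS hzmem) hz
  exact interior_maximal hsubset hopen hxU

private lemma comb_mem (s : Set (Fin 3 → ℝ)) (p : Fin 3 → (Fin 3 → ℝ)) (μ : Fin 3 → ℝ)
    (hp : ∀ i, p i ∈ s) (hμ : ∀ i, 0 ≤ μ i) (hsum : μ 0 + μ 1 + μ 2 = 1) :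
    μ 0 • p 0 + μ 1 • p 1 + μ 2 • p 2 ∈ convexHull ℝ s := by
  have hs : ∑ i, μ i = 1 := by rw [Fin.sum_univ_three]; exact hsum
  have := (Finset.univ : Finset (Fin 3)).centerMass_mem_convexHull
    (w := μ) (z := p) (fun i _ => hμ i) (by rw [hs]; norm_num) (fun i _ => hp i)
  rwa [Finset.centerMass_eq_of_sum_1 _ _ hs, Fin.sum_univ_three] at this

/-- the simplex `S₁ = conv((0,0,0),(2,0,0),(0,3,0),(0,0,6)) ⊆ ℝ³` has no
integer point in its interior, and each of its four facets contains an integer point in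
its relative interior. -/
theorem stmt7 (w : Fin 4 → (Fin 3 → ℝ))
    (hw : w = ![![0, 0, 0], ![2, 0, 0], ![0, 3, 0], ![0, 0, 6]]) :
    (∀ x ∈ interior (convexHull ℝ (Set.range w)), ¬ ∀ i, ∃ z : ℤ, x i = z) ∧
      (∀ k : Fin 4, ∃ x ∈ intrinsicInterior ℝ (convexHull ℝ (w '' {k}ᶜ)),
        ∀ i, ∃ z : ℤ, x i = z) := by
  subst hw
  constructor
  · intro x hx hint
    have hK : convexHull ℝ (Set.range ![![0, 0, 0], ![2, 0, 0], ![0, 3, 0], ![0, 0, 6]]) ⊆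
        {y : Fin 3 → ℝ | 0 ≤ y 0 ∧ 0 ≤ y 1 ∧ 0 ≤ y 2 ∧ 3 * y 0 + 2 * y 1 + y 2 ≤ 6} := by
      apply convexHull_min
      · rintro y ⟨j, rfl⟩
        fin_cases j <;> refine ⟨?_, ?_, ?_, ?_⟩ <;>
          norm_num [Matrix.cons_val_two, Matrix.vecHead, Matrix.vecTail]
      · intro u hu v hv α β hα hβ hαβ
        simp only [Set.mem_setOf_eq, Pi.add_apply, Pi.smul_apply, smul_eq_mul] at hu hv ⊢
        refine ⟨by nlinarith [hu.1, hv.1], by nlinarith [hu.2.1, hv.2.1],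
          by nlinarith [hu.2.2.1, hv.2.2.1], by nlinarith [hu.2.2.2, hv.2.2.2]⟩
    obtain ⟨ε, hε, hball⟩ := Metric.mem_nhds_iff.1 (mem_interior_iff_mem_nhds.1 hx)
    have hone : ‖(fun _ => (1:ℝ) : Fin 3 → ℝ)‖ = 1 := by
      rw [pi_norm_const (1:ℝ)]; simp
    have hdist : ∀ r : ℝ, |r| < ε →
        (fun i => x i + r : Fin 3 → ℝ) ∈ Metric.ball x ε := by
      intro r hr
      have he : (fun i => x i + r : Fin 3 → ℝ) = x + r • (fun _ => (1:ℝ)) := by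
        funext i; simp
      rw [Metric.mem_ball, he, dist_eq_norm, add_sub_cancel_left, norm_smul, hone,
        mul_one]
      exact hr
    have habs : |ε/2| < ε := by rw [abs_of_pos (by linarith)]; linarith
    have hneg : (fun i => x i + (-(ε/2)) : Fin 3 → ℝ) ∈ Metric.ball x ε := by
      apply hdist; rwa [abs_neg]
    have hpos : (fun i => x i + (ε/2) : Fin 3 → ℝ) ∈ Metric.ball x ε := hdist _ habs
    have h1 := hK (hball hneg)
    have h2 := hK (hball hpos)
    simp only [Set.mem_setOf_eq] at h1 h2
    have hx0 : 0 < x 0 := by linarith [h1.1]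
    have hx1 : 0 < x 1 := by linarith [h1.2.1]
    have hx2 : 0 < x 2 := by linarith [h1.2.2.1]
    have hlt : 3 * x 0 + 2 * x 1 + x 2 < 6 := by linarith [h2.2.2.2]
    obtain ⟨z0, hz0⟩ := hint 0
    obtain ⟨z1, hz1⟩ := hint 1
    obtain ⟨z2, hz2⟩ := hint 2
    have hz0' : (1:ℝ) ≤ z0 := by
      have : (0:ℤ) < z0 := by exact_mod_cast hz0 ▸ hx0
      exact_mod_cast this
    have hz1' : (1:ℝ) ≤ z1 := by
      have : (0:ℤ) < z1 := by exact_mod_cast hz1 ▸ hx1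
      exact_mod_cast this
    have hz2' : (1:ℝ) ≤ z2 := by
      have : (0:ℤ) < z2 := by exact_mod_cast hz2 ▸ hx2
      exact_mod_cast this
    rw [hz0, hz1, hz2] at hlt
    linarith
  · intro k
    fin_cases k
    · refine ⟨![1,1,1], ?_, fun i => by fin_cases i; exacts [⟨1, by norm_num⟩, ⟨1, by norm_num⟩, ⟨1, by norm_num⟩]⟩
      apply helper7 ![(3:ℝ),2,1] 6 _ {y : Fin 3 → ℝ | 0 < y 0 ∧ 0 < y 1 ∧ 0 < y 2}
      · have e : {y : Fin 3 → ℝ | 0 < y 0 ∧ 0 < y 1 ∧ 0 < y 2} = {y : Fin 3 → ℝ | 0 < y 0} ∩ ({y : Fin 3 → ℝ | 0 < y 1} ∩ {y : Fin 3 → ℝ | 0 < y 2}) := rfl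
        rw [e]
        exact (isOpen_lt continuous_const (continuous_apply 0)).inter
          ((isOpen_lt continuous_const (continuous_apply 1)).inter
            (isOpen_lt continuous_const (continuous_apply 2)))
      · refine ⟨?_, ?_, ?_⟩ <;> norm_num [Matrix.cons_val_two, Matrix.vecHead, Matrix.vecTail]
      · norm_num [Matrix.cons_val_two, Matrix.vecHead, Matrix.vecTail]
      · rintro y ⟨j, hj, rfl⟩
        fin_cases j <;> simp_all [Matrix.vecHead, Matrix.vecTail] <;> norm_num
      · rintro y hc ⟨h1, h2, h3⟩
        simp only [Matrix.cons_val_zero, Matrix.cons_val_one, Matrix.head_cons,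
          Matrix.cons_val_two, Matrix.tail_cons] at hc
        have hm := comb_mem (![![0, 0, 0], ![2, 0, 0], ![0, 3, 0], ![0, 0, 6]] '' {(0 : Fin 4)}ᶜ)
          ![![2,0,0], ![0,3,0], ![0,0,6]] ![y 0 / 2, y 1 / 3, y 2 / 6]
          (by intro i; fin_cases i
              · exact ⟨1, by simp, by simp⟩
              · exact ⟨2, by simp, by simp⟩
              · exact ⟨3, by simp, by simp⟩)
          (by intro i; fin_cases i <;> simp <;> [positivity; positivity; positivity])
          (by simp only [Matrix.cons_val_zero, Matrix.cons_val_one, Matrix.head_cons,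
                Matrix.cons_val_two, Matrix.tail_cons]; linarith)
        have he : y = ![y 0 / 2, y 1 / 3, y 2 / 6] 0 • (![![2,0,0], ![0,3,0], ![0,0,6]] : Fin 3 → Fin 3 → ℝ) 0
            + ![y 0 / 2, y 1 / 3, y 2 / 6] 1 • (![![2,0,0], ![0,3,0], ![0,0,6]] : Fin 3 → Fin 3 → ℝ) 1
            + ![y 0 / 2, y 1 / 3, y 2 / 6] 2 • (![![2,0,0], ![0,3,0], ![0,0,6]] : Fin 3 → Fin 3 → ℝ) 2 := by
          funext i
          fin_cases i <;>
            simp [Matrix.vecHead, Matrix.vecTail] <;> ring_nf <;> linarith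
        rw [he]; exact hm
    · refine ⟨![0,1,1], ?_, fun i => by fin_cases i; exacts [⟨0, by norm_num⟩, ⟨1, by norm_num⟩, ⟨1, by norm_num⟩]⟩
      apply helper7 ![(1:ℝ),0,0] 0 _ {y : Fin 3 → ℝ | 0 < y 1 ∧ 0 < y 2 ∧ 2 * y 1 + y 2 < 6}
      · have e : {y : Fin 3 → ℝ | 0 < y 1 ∧ 0 < y 2 ∧ 2 * y 1 + y 2 < 6} = {y : Fin 3 → ℝ | 0 < y 1} ∩ ({y : Fin 3 → ℝ | 0 < y 2} ∩ {y : Fin 3 → ℝ | 2 * y 1 + y 2 < 6}) := rfl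
        rw [e]
        exact (isOpen_lt continuous_const (continuous_apply 1)).inter
          ((isOpen_lt continuous_const (continuous_apply 2)).inter
            (isOpen_lt (by fun_prop : Continuous (fun y : Fin 3 → ℝ => 2 * y 1 + y 2)) continuous_const))
      · refine ⟨?_, ?_, ?_⟩ <;> norm_num [Matrix.cons_val_two, Matrix.vecHead, Matrix.vecTail]
      · norm_num [Matrix.cons_val_two, Matrix.vecHead, Matrix.vecTail]
      · rintro y ⟨j, hj, rfl⟩
        fin_cases j <;> simp_all [Matrix.vecHead, Matrix.vecTail] <;> norm_num
      · rintro y hc ⟨h1, h2, h3⟩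
        simp only [Matrix.cons_val_zero, Matrix.cons_val_one, Matrix.head_cons,
          Matrix.cons_val_two, Matrix.tail_cons] at hc
        have hy0 : y 0 = 0 := by linarith
        have hm := comb_mem (![![0, 0, 0], ![2, 0, 0], ![0, 3, 0], ![0, 0, 6]] '' {(1 : Fin 4)}ᶜ)
          ![![0,0,0], ![0,3,0], ![0,0,6]] ![(6 - 2 * y 1 - y 2) / 6, y 1 / 3, y 2 / 6]
          (by intro i; fin_cases i
              · exact ⟨0, by simp, by simp⟩
              · exact ⟨2, by simp, by simp⟩
              · exact ⟨3, by simp, by simp⟩)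
          (by intro i; fin_cases i <;> simp <;> [linarith; positivity; positivity])
          (by simp only [Matrix.cons_val_zero, Matrix.cons_val_one, Matrix.head_cons,
                Matrix.cons_val_two, Matrix.tail_cons]; ring)
        have he : y = ![(6 - 2 * y 1 - y 2) / 6, y 1 / 3, y 2 / 6] 0 • (![![0,0,0], ![0,3,0], ![0,0,6]] : Fin 3 → Fin 3 → ℝ) 0
            + ![(6 - 2 * y 1 - y 2) / 6, y 1 / 3, y 2 / 6] 1 • (![![0,0,0], ![0,3,0], ![0,0,6]] : Fin 3 → Fin 3 → ℝ) 1
            + ![(6 - 2 * y 1 - y 2) / 6, y 1 / 3, y 2 / 6] 2 • (![![0,0,0], ![0,3,0], ![0,0,6]] : Fin 3 → Fin 3 → ℝ) 2 := by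
          funext i
          fin_cases i <;>
            simp [Matrix.vecHead, Matrix.vecTail] <;> ring_nf <;> linarith
        rw [he]; exact hm
    · refine ⟨![1,0,1], ?_, fun i => by fin_cases i; exacts [⟨1, by norm_num⟩, ⟨0, by norm_num⟩, ⟨1, by norm_num⟩]⟩
      apply helper7 ![(0:ℝ),1,0] 0 _ {y : Fin 3 → ℝ | 0 < y 0 ∧ 0 < y 2 ∧ 3 * y 0 + y 2 < 6}
      · have e : {y : Fin 3 → ℝ | 0 < y 0 ∧ 0 < y 2 ∧ 3 * y 0 + y 2 < 6} = {y : Fin 3 → ℝ | 0 < y 0} ∩ ({y : Fin 3 → ℝ | 0 < y 2} ∩ {y : Fin 3 → ℝ | 3 * y 0 + y 2 < 6}) := rfl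
        rw [e]
        exact (isOpen_lt continuous_const (continuous_apply 0)).inter
          ((isOpen_lt continuous_const (continuous_apply 2)).inter
            (isOpen_lt (by fun_prop : Continuous (fun y : Fin 3 → ℝ => 3 * y 0 + y 2)) continuous_const))
      · refine ⟨?_, ?_, ?_⟩ <;> norm_num [Matrix.cons_val_two, Matrix.vecHead, Matrix.vecTail]
      · norm_num [Matrix.cons_val_two, Matrix.vecHead, Matrix.vecTail]
      · rintro y ⟨j, hj, rfl⟩
        fin_cases j <;> simp_all [Matrix.vecHead, Matrix.vecTail] <;> norm_num
      · rintro y hc ⟨h1, h2, h3⟩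
        simp only [Matrix.cons_val_zero, Matrix.cons_val_one, Matrix.head_cons,
          Matrix.cons_val_two, Matrix.tail_cons] at hc
        have hy1 : y 1 = 0 := by linarith
        have hm := comb_mem (![![0, 0, 0], ![2, 0, 0], ![0, 3, 0], ![0, 0, 6]] '' {(2 : Fin 4)}ᶜ)
          ![![0,0,0], ![2,0,0], ![0,0,6]] ![(6 - 3 * y 0 - y 2) / 6, y 0 / 2, y 2 / 6]
          (by intro i; fin_cases i
              · exact ⟨0, by simp, by simp⟩
              · exact ⟨1, by simp, by simp⟩
              · exact ⟨3, by simp, by simp⟩)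
          (by intro i; fin_cases i <;> simp <;> [linarith; positivity; positivity])
          (by simp only [Matrix.cons_val_zero, Matrix.cons_val_one, Matrix.head_cons,
                Matrix.cons_val_two, Matrix.tail_cons]; ring)
        have he : y = ![(6 - 3 * y 0 - y 2) / 6, y 0 / 2, y 2 / 6] 0 • (![![0,0,0], ![2,0,0], ![0,0,6]] : Fin 3 → Fin 3 → ℝ) 0
            + ![(6 - 3 * y 0 - y 2) / 6, y 0 / 2, y 2 / 6] 1 • (![![0,0,0], ![2,0,0], ![0,0,6]] : Fin 3 → Fin 3 → ℝ) 1
            + ![(6 - 3 * y 0 - y 2) / 6, y 0 / 2, y 2 / 6] 2 • (![![0,0,0], ![2,0,0], ![0,0,6]] : Fin 3 → Fin 3 → ℝ) 2 := by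
          funext i
          fin_cases i <;>
            simp [Matrix.vecHead, Matrix.vecTail] <;> ring_nf <;> linarith
        rw [he]; exact hm
    · refine ⟨![1,1,0], ?_, fun i => by fin_cases i; exacts [⟨1, by norm_num⟩, ⟨1, by norm_num⟩, ⟨0, by norm_num⟩]⟩
      apply helper7 ![(0:ℝ),0,1] 0 _ {y : Fin 3 → ℝ | 0 < y 0 ∧ 0 < y 1 ∧ 3 * y 0 + 2 * y 1 < 6}
      · have e : {y : Fin 3 → ℝ | 0 < y 0 ∧ 0 < y 1 ∧ 3 * y 0 + 2 * y 1 < 6} = {y : Fin 3 → ℝ | 0 < y 0} ∩ ({y : Fin 3 → ℝ | 0 < y 1} ∩ {y : Fin 3 → ℝ | 3 * y 0 + 2 * y 1 < 6}) := rfl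
        rw [e]
        exact (isOpen_lt continuous_const (continuous_apply 0)).inter
          ((isOpen_lt continuous_const (continuous_apply 1)).inter
            (isOpen_lt (by fun_prop : Continuous (fun y : Fin 3 → ℝ => 3 * y 0 + 2 * y 1)) continuous_const))
      · refine ⟨?_, ?_, ?_⟩ <;> norm_num [Matrix.cons_val_two, Matrix.vecHead, Matrix.vecTail]
      · norm_num [Matrix.cons_val_two, Matrix.vecHead, Matrix.vecTail]
      · rintro y ⟨j, hj, rfl⟩
        fin_cases j <;> simp_all [Matrix.vecHead, Matrix.vecTail] <;> norm_num
      · rintro y hc ⟨h1, h2, h3⟩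
        simp only [Matrix.cons_val_zero, Matrix.cons_val_one, Matrix.head_cons,
          Matrix.cons_val_two, Matrix.tail_cons] at hc
        have hy2 : y 2 = 0 := by linarith
        have hm := comb_mem (![![0, 0, 0], ![2, 0, 0], ![0, 3, 0], ![0, 0, 6]] '' {(3 : Fin 4)}ᶜ)
          ![![0,0,0], ![2,0,0], ![0,3,0]] ![(6 - 3 * y 0 - 2 * y 1) / 6, y 0 / 2, y 1 / 3]
          (by intro i; fin_cases i
              · exact ⟨0, by simp, by simp⟩
              · exact ⟨1, by simp, by simp⟩
              · exact ⟨2, by simp, by simp⟩)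
          (by intro i; fin_cases i <;> simp <;> [linarith; positivity; positivity])
          (by simp only [Matrix.cons_val_zero, Matrix.cons_val_one, Matrix.head_cons,
                Matrix.cons_val_two, Matrix.tail_cons]; ring)
        have he : y = ![(6 - 3 * y 0 - 2 * y 1) / 6, y 0 / 2, y 1 / 3] 0 • (![![0,0,0], ![2,0,0], ![0,3,0]] : Fin 3 → Fin 3 → ℝ) 0
            + ![(6 - 3 * y 0 - 2 * y 1) / 6, y 0 / 2, y 1 / 3] 1 • (![![0,0,0], ![2,0,0], ![0,3,0]] : Fin 3 → Fin 3 → ℝ) 1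
            + ![(6 - 3 * y 0 - 2 * y 1) / 6, y 0 / 2, y 1 / 3] 2 • (![![0,0,0], ![2,0,0], ![0,3,0]] : Fin 3 → Fin 3 → ℝ) 2 := by
          funext i
          fin_cases i <;>
            simp [Matrix.vecHead, Matrix.vecTail] <;> ring_nf <;> linarith
        rw [he]; exact hm
end

section
/- The simplex S_4 = conv((0,0,0), (1,0,0), (2,4,0), (3,0,4)) ⊆ ℝ^3 contains no integer point in its interior. -/
open ContinuousLinearMap in
/-- A continuous linear functional on `Fin 3 → ℝ` with given coefficients. -/
noncomputable def lf (a b c : ℝ) : (Fin 3 → ℝ) →L[ℝ] ℝ :=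
  a • proj 0 + b • proj 1 + c • proj 2

@[simp] lemma lf_apply (a b c : ℝ) (x : Fin 3 → ℝ) :
    lf a b c x = a * x 0 + b * x 1 + c * x 2 := by
  simp [lf, smul_eq_mul]

lemma interior_lt (f : (Fin 3 → ℝ) →L[ℝ] ℝ) (hf : f ≠ 0) (c : ℝ)
    {S : Set (Fin 3 → ℝ)} (hS : S ⊆ {x | f x ≤ c}) {x} (hx : x ∈ interior S) :
    f x < c := by
  have h1 : f x ∈ interior (f '' S) :=
    (f.isOpenMap_of_ne_zero hf).image_interior_subset S ⟨x, hx, rfl⟩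
  have h2 : interior (f '' S) ⊆ interior (Set.Iic c) :=
    interior_mono (by rintro _ ⟨y, hy, rfl⟩; exact hS hy)
  simpa [interior_Iic] using h2 h1

lemma conv_sub (a b c d : ℝ)
    (h0 : lf a b c ![0, 0, 0] ≤ d) (h1 : lf a b c ![1, 0, 0] ≤ d)
    (h2 : lf a b c ![2, 4, 0] ≤ d) (h3 : lf a b c ![3, 0, 4] ≤ d) :
    convexHull ℝ ({![0, 0, 0], ![1, 0, 0], ![2, 4, 0], ![3, 0, 4]} : Set (Fin 3 → ℝ))
      ⊆ {x | lf a b c x ≤ d} := by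
  apply convexHull_min
  · rintro x (rfl | rfl | rfl | rfl) <;> assumption
  · have : {x : Fin 3 → ℝ | lf a b c x ≤ d} = (lf a b c) ⁻¹' Set.Iic d := rfl
    rw [this]
    exact (convex_Iic d).linear_preimage (lf a b c : (Fin 3 → ℝ) →ₗ[ℝ] ℝ)

lemma lf_ne_zero {a b c : ℝ} (h : ¬ (a = 0 ∧ b = 0 ∧ c = 0)) : lf a b c ≠ 0 := by
  intro hf
  have h0 := congrArg (fun f => f ![1, 0, 0]) hf
  have h1 := congrArg (fun f => f ![0, 1, 0]) hf
  have h2 := congrArg (fun f => f ![0, 0, 1]) hf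
  simp at h0 h1 h2
  exact h ⟨h0, h1, h2⟩

/-- the simplex `S₄ = conv((0,0,0),(1,0,0),(2,4,0),(3,0,4)) ⊆ ℝ³`
contains no integer point in its interior. -/
theorem stmt9 :
    ∀ x ∈ interior (convexHull ℝ
      ({![0, 0, 0], ![1, 0, 0], ![2, 4, 0], ![3, 0, 4]} : Set (Fin 3 → ℝ))),
      ¬ ∀ i, ∃ z : ℤ, x i = z := by
  intro x hx hz
  obtain ⟨z0, hz0⟩ := hz 0
  obtain ⟨z1, hz1⟩ := hz 1
  obtain ⟨z2, hz2⟩ := hz 2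
  have H1 : lf 0 0 (-1) x < 0 := by
    refine interior_lt _ (lf_ne_zero (by norm_num)) _ (conv_sub _ _ _ _ ?_ ?_ ?_ ?_) hx <;>
      simp <;> norm_num
  have H2 : lf 0 (-1) 0 x < 0 := by
    refine interior_lt _ (lf_ne_zero (by norm_num)) _ (conv_sub _ _ _ _ ?_ ?_ ?_ ?_) hx <;>
      simp <;> norm_num
  have H3 : lf (-4) 2 3 x < 0 := by
    refine interior_lt _ (lf_ne_zero (by norm_num)) _ (conv_sub _ _ _ _ ?_ ?_ ?_ ?_) hx <;>
      simp <;> norm_num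
  have H4 : lf 4 (-1) (-2) x < 4 := by
    refine interior_lt _ (lf_ne_zero (by norm_num)) _ (conv_sub _ _ _ _ ?_ ?_ ?_ ?_) hx <;>
      simp <;> norm_num
  simp only [lf_apply, hz0, hz1, hz2] at H1 H2 H3 H4
  have R1 : (0:ℝ) < (z2:ℝ) := by linarith
  have I1 : (0 : ℤ) < z2 := by exact_mod_cast R1
  have R2 : (0:ℝ) < (z1:ℝ) := by linarith
  have I2 : (0 : ℤ) < z1 := by exact_mod_cast R2
  have I3 : (-4 : ℤ) * z0 + 2 * z1 + 3 * z2 < 0 := by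
    have : ((-4 : ℤ) * z0 + 2 * z1 + 3 * z2 : ℝ) < 0 := by push_cast; linarith
    exact_mod_cast this
  have I4 : (4 : ℤ) * z0 - z1 - 2 * z2 < 4 := by
    have : ((4 : ℤ) * z0 - z1 - 2 * z2 : ℝ) < 4 := by push_cast; linarith
    exact_mod_cast this
  omega
end

section
/- The simplex S_5 = conv((0,0,0), (1,0,0), (2,5,0), (3,0,5)) ⊆ ℝ^3 contains no integer point in its interior. -/
open ContinuousLinearMap in
private lemma half_lemma (f : (Fin 3 → ℝ) →L[ℝ] ℝ) (c : ℝ)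
    (hsurj : Function.Surjective f)
    (h0 : f ![0,0,0] ≤ c) (h1 : f ![1,0,0] ≤ c) (h2 : f ![2,5,0] ≤ c)
    (h3 : f ![3,0,5] ≤ c) :
    interior (convexHull ℝ
      ({![0, 0, 0], ![1, 0, 0], ![2, 5, 0], ![3, 0, 5]} : Set (Fin 3 → ℝ)))
      ⊆ {x | f x < c} := by
  have hsub : convexHull ℝ
      ({![0, 0, 0], ![1, 0, 0], ![2, 5, 0], ![3, 0, 5]} : Set (Fin 3 → ℝ))
      ⊆ {x | f x ≤ c} := by
    apply convexHull_min _ (convex_halfSpace_le (f : (Fin 3 → ℝ) →ₗ[ℝ] ℝ).isLinear c)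
    rintro x (rfl | rfl | rfl | rfl) <;> assumption
  have := interior_mono hsub
  refine this.trans ?_
  have heq : {x : Fin 3 → ℝ | f x ≤ c} = f ⁻¹' Set.Iic c := rfl
  rw [heq, ← (f.isOpenMap hsurj).preimage_interior_eq_interior_preimage f.continuous,
    interior_Iic]
  exact fun x hx => hx

/-- the simplex `S₅ = conv((0,0,0),(1,0,0),(2,5,0),(3,0,5)) ⊆ ℝ³`
contains no integer point in its interior. -/
theorem stmt10 :
    ∀ x ∈ interior (convexHull ℝ
      ({![0, 0, 0], ![1, 0, 0], ![2, 5, 0], ![3, 0, 5]} : Set (Fin 3 → ℝ))),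
      ¬ ∀ i, ∃ z : ℤ, x i = z := by
  intro x hx hint
  obtain ⟨a, ha⟩ := hint 0
  obtain ⟨b, hb⟩ := hint 1
  obtain ⟨cz, hc⟩ := hint 2
  -- four functionals
  set p0 : (Fin 3 → ℝ) →L[ℝ] ℝ := ContinuousLinearMap.proj 0
  set p1 : (Fin 3 → ℝ) →L[ℝ] ℝ := ContinuousLinearMap.proj 1
  set p2 : (Fin 3 → ℝ) →L[ℝ] ℝ := ContinuousLinearMap.proj 2
  have key1 := half_lemma (-p2) 0
    (fun r => ⟨![0,0,-r], by simp [p2]⟩)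
    (by simp [p2]) (by simp [p2]) (by simp [p2]) (by simp [p2]) hx
  have key2 := half_lemma (-p1) 0
    (fun r => ⟨![0,-r,0], by simp [p1]⟩)
    (by simp [p1]) (by simp [p1]) (by simp [p1]) (by simp [p1]) hx
  have key3 := half_lemma ((-5 : ℝ) • p0 + (2 : ℝ) • p1 + (3 : ℝ) • p2) 0
    (fun r => ⟨![-r/5,0,0], by simp [p0, p1, p2]; try ring⟩)
    (by simp [p0, p1, p2]) (by simp [p0, p1, p2] <;> norm_num)
    (by simp [p0, p1, p2] <;> norm_num) (by simp [p0, p1, p2] <;> norm_num) hx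
  have key4 := half_lemma ((5 : ℝ) • p0 + (-1 : ℝ) • p1 + (-2 : ℝ) • p2) 5
    (fun r => ⟨![r/5,0,0], by simp [p0, p1, p2]; try ring⟩)
    (by simp [p0, p1, p2]) (by simp [p0, p1, p2]) (by simp [p0, p1, p2] <;> norm_num)
    (by simp [p0, p1, p2] <;> norm_num) hx
  simp only [Set.mem_setOf_eq, ContinuousLinearMap.add_apply,
    ContinuousLinearMap.smul_apply, ContinuousLinearMap.neg_apply,
    ContinuousLinearMap.proj_apply, smul_eq_mul, p0, p1, p2] at key1 key2 key3 key4
  simp only [ha, hb, hc] at key1 key2 key3 key4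
  have i1 : -(cz : ℤ) < 0 := by exact_mod_cast key1
  have i2 : -(b : ℤ) < 0 := by exact_mod_cast key2
  have i3 : -5 * a + 2 * b + 3 * cz < 0 := by exact_mod_cast key3
  have i4 : 5 * a + -1 * b + -2 * cz < 5 := by exact_mod_cast key4
  omega
end
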